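/- arXiv:2005.11683 — 2 statements merged into one kernel-verified Lean document; each statement's English description precedes it below -/
import Mathlib

section
/- With (c*, a*)(ε) = (1/√2 + (3+2γ)ε/4 + O(ε^{3/2}), -(3+2γ)ε/(4√2) + O(ε^{3/2})), the stability condition c*εγ > -a* holds for all sufficiently small ε > 0 if and only if γ > 3/2. -/
lemma rpow32_eq {ε : ℝ} (hε : 0 < ε) : ε ^ ((3:ℝ)/2) = ε * Real.sqrt ε := by
  rw [show (3:ℝ)/2 = 1 + 1/2 by norm_num, Real.rpow_add hε, Real.rpow_one, ← Real.sqrt_eq_rpow]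

set_option maxHeartbeats 1600000 in
/-- With (c*, a*)(ε) = (1/√2 + (3+2γ)ε/4 + O(ε^{3/2}), -(3+2γ)ε/(4√2) + O(ε^{3/2})),
the stability condition c*εγ > -a* holds for all sufficiently small ε > 0 (for every
choice of the O(ε^{3/2}) remainders) iff γ > 3/2. -/
theorem stmt_11 (γ : ℝ) (hγ : 0 < γ) :
    (∀ cst ast : ℝ → ℝ,
      (∃ C ε₁ : ℝ, 0 < C ∧ 0 < ε₁ ∧ ∀ ε ∈ Set.Ioo (0:ℝ) ε₁,
        |cst ε - (1 / Real.sqrt 2 + (3 + 2 * γ) / 4 * ε)| ≤ C * ε ^ ((3:ℝ)/2) ∧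
        |ast ε - (-(3 + 2 * γ) / (4 * Real.sqrt 2) * ε)| ≤ C * ε ^ ((3:ℝ)/2)) →
      ∃ ε₀ > (0:ℝ), ∀ ε : ℝ, 0 < ε → ε < ε₀ → cst ε * ε * γ > -(ast ε))
    ↔ γ > 3/2 := by
  set s : ℝ := Real.sqrt 2 with hs_def
  clear_value s
  have hs0 : 0 < s := by rw [hs_def]; exact Real.sqrt_pos.mpr (by norm_num)
  have hs2 : s * s = 2 := by rw [hs_def]; exact Real.mul_self_sqrt (by norm_num)
  have e1 : 1 / s = s / 2 := by
    rw [div_eq_div_iff hs0.ne' (by norm_num)]; linarith [hs2]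
  have e2 : -(3 + 2 * γ) / (4 * s) = -((3 + 2 * γ) * s) / 8 := by
    rw [div_eq_div_iff (by positivity) (by norm_num)]; nlinarith [hs2]
  constructor
  · -- forward: stability for all remainders ⇒ γ > 3/2
    intro H
    obtain ⟨ε₀, hε₀, hall⟩ := H (fun ε => 1 / s + (3 + 2 * γ) / 4 * ε)
      (fun ε => -(3 + 2 * γ) / (4 * s) * ε - ε * Real.sqrt ε)
      ⟨1, 1, one_pos, one_pos, by
        intro ε hε
        constructor
        · simp only [add_sub_cancel_left, sub_self, abs_zero, one_mul]
          exact Real.rpow_nonneg hε.1.le _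
        · simp only [sub_sub_cancel_left]
          rw [abs_neg, abs_of_nonneg (mul_nonneg hε.1.le (Real.sqrt_nonneg _)),
            rpow32_eq hε.1, one_mul]⟩
    set b : ℝ := 4 / (γ * (3 + 2 * γ)) with hb_def
    clear_value b
    have hb0 : 0 < b := by rw [hb_def]; positivity
    set ε : ℝ := min (ε₀ / 2) (b ^ 2) with hε_def
    clear_value ε
    have hε0 : 0 < ε := by
      rw [hε_def]; exact lt_min (by linarith) (by positivity)
    have hεε₀ : ε < ε₀ := by
      rw [hε_def]; exact lt_of_le_of_lt (min_le_left _ _) (by linarith)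
    have hineq := hall ε hε0 hεε₀
    set t : ℝ := Real.sqrt ε with ht_def
    have ht0 : 0 < t := by rw [ht_def]; exact Real.sqrt_pos.mpr hε0
    have ht2 : t * t = ε := by rw [ht_def]; exact Real.mul_self_sqrt hε0.le
    have htb : t ≤ b := by
      rw [ht_def]
      calc Real.sqrt ε ≤ Real.sqrt (b ^ 2) := by
            apply Real.sqrt_le_sqrt
            rw [hε_def]; exact min_le_right _ _
        _ = b := Real.sqrt_sq hb0.le
    clear_value t
    have hkey : γ * (3 + 2 * γ) * t ≤ 4 := by
      have h1 : γ * (3 + 2 * γ) * t ≤ γ * (3 + 2 * γ) * b :=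
        mul_le_mul_of_nonneg_left htb (by positivity)
      have h2 : γ * (3 + 2 * γ) * b = 4 := by
        rw [hb_def]; field_simp
      linarith
    rw [e1, e2] at hineq
    -- hineq : (s/2 + (3+2γ)/4*ε)*ε*γ > -( -((3+2γ)s)/8*ε - ε*t )
    have hdom : γ * (3 + 2 * γ) / 4 * (ε * ε) ≤ ε * t := by
      nlinarith [mul_pos hε0 ht0, hkey, hε0.le, ht0.le]
    by_contra hcon
    push_neg at hcon
    nlinarith [mul_pos hε0 hs0, hineq, hdom,
      mul_nonneg (mul_nonneg hε0.le hs0.le) (by linarith : (0:ℝ) ≤ 3/2 - γ)]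
  · -- reverse: γ > 3/2 ⇒ stability
    intro hγ32 cst ast ⟨C, ε₁, hC, hε₁, hbnd⟩
    set δ : ℝ := (2 * γ - 3) / (4 * s) with hδ_def
    clear_value δ
    have hδ0 : 0 < δ := by
      rw [hδ_def]; exact div_pos (by linarith) (by positivity)
    set b : ℝ := δ / (C * (γ + 1)) with hb_def
    clear_value b
    have hb0 : 0 < b := by rw [hb_def]; positivity
    refine ⟨min ε₁ (min 1 (b ^ 2)), by positivity, ?_⟩
    intro ε hε0 hεlt
    have hεε₁ : ε < ε₁ := lt_of_lt_of_le hεlt (min_le_left _ _)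
    have hεle1 : ε < 1 := lt_of_lt_of_le hεlt (le_trans (min_le_right _ _) (min_le_left _ _))
    have hεb : ε < b ^ 2 := lt_of_lt_of_le hεlt (le_trans (min_le_right _ _) (min_le_right _ _))
    obtain ⟨hcb, hab⟩ := hbnd ε ⟨hε0, hεε₁⟩
    rw [rpow32_eq hε0] at hcb hab
    set t : ℝ := Real.sqrt ε with ht_def
    have ht0 : 0 < t := Real.sqrt_pos.mpr hε0
    have ht2 : t * t = ε := Real.mul_self_sqrt hε0.le
    have htb : t < b := (Real.sqrt_lt' hb0).mpr hεb
    clear_value t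
    have hkey : C * (γ + 1) * t < δ := by
      have h1 : C * (γ + 1) * t < C * (γ + 1) * b :=
        mul_lt_mul_of_pos_left htb (by positivity)
      have h2 : C * (γ + 1) * b = δ := by
        rw [hb_def]; field_simp
      linarith
    have hc := (abs_le.mp hcb).1
    have ha := (abs_le.mp hab).1
    rw [e1] at hc
    rw [e2] at ha
    have hδ2 : s * (2 * γ - 3) / 8 = δ := by
      rw [hδ_def, div_eq_div_iff (by norm_num) (by positivity)]; nlinarith [hs2]
    have hbig : C * t * (γ * ε + 1) < δ := by
      have hp : C * t * (γ * ε) ≤ C * t * γ :=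
        mul_le_mul_of_nonneg_left (mul_le_of_le_one_right hγ.le hεle1.le)
          (mul_nonneg hC.le ht0.le)
      have hcγt : 0 < C * t := mul_pos hC ht0
      nlinarith [hkey, hp]
    have hcore : (s / 2 + (3 + 2 * γ) / 4 * ε - C * (ε * t)) * ε * γ >
        ((3 + 2 * γ) * s) / 8 * ε + C * (ε * t) := by
      have h1 : 0 < ε * (δ - C * t * (γ * ε + 1)) :=
        mul_pos hε0 (by linarith)
      have hδ2' : ε * (s * (2 * γ - 3) / 8) = ε * δ := by rw [hδ2]
      have hnn : 0 ≤ γ * (3 + 2 * γ) / 4 * (ε * ε) := by positivity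
      nlinarith [h1, hδ2', hnn]
    have hclow : cst ε ≥ s / 2 + (3 + 2 * γ) / 4 * ε - C * (ε * t) := by linarith
    have hahigh : -(ast ε) ≤ ((3 + 2 * γ) * s) / 8 * ε + C * (ε * t) := by linarith
    calc -(ast ε) ≤ ((3 + 2 * γ) * s) / 8 * ε + C * (ε * t) := hahigh
      _ < (s / 2 + (3 + 2 * γ) / 4 * ε - C * (ε * t)) * ε * γ := hcore
      _ ≤ cst ε * ε * γ := by
        apply mul_le_mul_of_nonneg_right _ hγ.le
        exact mul_le_mul_of_nonneg_right hclow hε0.le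
end

section
/- Define λ_max : (w_A^-(0,0), 8/27 - w_A^-(0,0)) → (0, 5/24] by λ_max(s) = λ_{max,ℓ}(s) for s ∈ (w_A^-(0,0), 2/27), λ_max(s) = 5/24 for s ∈ [2/27, 2/9], and λ_max(s) = λ_{max,r}(s) for s ∈ (2/9, 8/27 - w_A^-(0,0)), where w_A^-(λ,0) = f(1/3 - √(10-48λ)/12) with f(u) = u²(1-u), λ_{max,ℓ} is the inverse of s ↦ w_A^-(s,0) and λ_{max,r}(s) = λ_{max,ℓ}(8/27 - s). Then λ_max is well defined (w_A^-(·,0) is injective on [0, 5/24]), satisfies the symmetry λ_max(s) = λ_max(8/27 - s), and w_A^-(0,0) = (64 - 19√10)/864, w_A^-(5/24,0) = 2/27. -/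
set_option maxHeartbeats 1000000 in
/-- With f(u) = u²(1-u) and w_A⁻(λ,0) = f(1/3 - √(10-48λ)/12): w_A⁻(·,0) is injective on
[0, 5/24], w_A⁻(0,0) = (64-19√10)/864, w_A⁻(5/24,0) = 2/27; there is an inverse λ_{max,ℓ},
and the piecewise function λ_max (with λ_{max,r}(s) = λ_{max,ℓ}(8/27-s)) maps
(w_A⁻(0,0), 8/27 - w_A⁻(0,0)) into (0, 5/24] and satisfies λ_max(s) = λ_max(8/27-s). -/
theorem stmt_16 :
    let f : ℝ → ℝ := fun u => u ^ 2 * (1 - u)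
    let wA : ℝ → ℝ := fun lam => f (1/3 - Real.sqrt (10 - 48 * lam) / 12)
    Set.InjOn wA (Set.Icc 0 (5/24)) ∧
    wA 0 = (64 - 19 * Real.sqrt 10) / 864 ∧
    wA (5/24) = 2/27 ∧
    ∃ lamℓ : ℝ → ℝ,
      (∀ s ∈ Set.Icc (wA 0) (2/27), lamℓ s ∈ Set.Icc (0:ℝ) (5/24) ∧ wA (lamℓ s) = s) ∧
      (let lamMax : ℝ → ℝ := fun s =>
          if s < 2/27 then lamℓ s else if s ≤ 2/9 then 5/24 else lamℓ (8/27 - s)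
       (∀ s ∈ Set.Ioo (wA 0) (8/27 - wA 0), lamMax s ∈ Set.Ioc (0:ℝ) (5/24)) ∧
       (∀ s ∈ Set.Ioo (wA 0) (8/27 - wA 0), lamMax s = lamMax (8/27 - s))) := by
  intro f wA
  have hr2 : Real.sqrt 10 ^ 2 = 10 := Real.sq_sqrt (by norm_num)
  have hrpos : (0:ℝ) < Real.sqrt 10 := Real.sqrt_pos.2 (by norm_num)
  -- strict monotonicity
  have hmono : StrictMonoOn wA (Set.Icc 0 (5/24)) := by
    intro a ha b hb hab
    obtain ⟨ha0, ha1⟩ := ha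
    obtain ⟨hb0, hb1⟩ := hb
    have hax : (0:ℝ) ≤ 10 - 48 * a := by linarith
    have hbx : (0:ℝ) ≤ 10 - 48 * b := by linarith
    have hsb : Real.sqrt (10 - 48 * b) < Real.sqrt (10 - 48 * a) :=
      Real.sqrt_lt_sqrt hbx (by linarith)
    have hsa2 : Real.sqrt (10 - 48 * a) ^ 2 = 10 - 48 * a := Real.sq_sqrt hax
    have hsann : 0 ≤ Real.sqrt (10 - 48 * a) := Real.sqrt_nonneg _
    have hsbnn : 0 ≤ Real.sqrt (10 - 48 * b) := Real.sqrt_nonneg _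
    have hsaub : Real.sqrt (10 - 48 * a) < 4 := by nlinarith
    set A := 1/3 - Real.sqrt (10 - 48 * a) / 12 with hA
    set B := 1/3 - Real.sqrt (10 - 48 * b) / 12 with hB
    have hApos : 0 < A := by rw [hA]; nlinarith
    have hAB : A < B := by rw [hA, hB]; linarith
    have hB3 : B ≤ 1/3 := by rw [hB]; linarith
    show A ^ 2 * (1 - A) < B ^ 2 * (1 - B)
    clear_value A B
    clear hsb hsa2 hsann hsbnn hsaub hA hB hax hbx hab ha0 ha1 hb0 hb1
    have hBpos : 0 < B := lt_trans hApos hAB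
    have hA3 : A < 1/3 := lt_of_lt_of_le hAB hB3
    have hfac : A ^ 2 + A * B + B ^ 2 < A + B := by
      nlinarith [mul_pos hApos (sub_pos.2 hA3), mul_nonneg hBpos.le (by linarith : (0:ℝ) ≤ 1/3 - B),
        mul_nonneg hApos.le (by linarith : (0:ℝ) ≤ 1/3 - B)]
    nlinarith [mul_pos (sub_pos.2 hAB) (sub_pos.2 hfac)]
  have hw0 : wA 0 = (64 - 19 * Real.sqrt 10) / 864 := by
    show (1/3 - Real.sqrt (10 - 48 * 0) / 12) ^ 2 * (1 - (1/3 - Real.sqrt (10 - 48 * 0) / 12))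
        = (64 - 19 * Real.sqrt 10) / 864
    rw [show (10 - 48 * (0:ℝ)) = 10 by norm_num]
    linear_combination (Real.sqrt 10 / 1728) * hr2
  have hw524 : wA (5/24) = 2/27 := by
    show (1/3 - Real.sqrt (10 - 48 * (5/24)) / 12) ^ 2 *
        (1 - (1/3 - Real.sqrt (10 - 48 * (5/24)) / 12)) = 2/27
    rw [show (10 - 48 * ((5:ℝ)/24)) = 0 by norm_num, Real.sqrt_zero]
    norm_num
  refine ⟨hmono.injOn, hw0, hw524, ?_⟩
  -- continuity
  have hcont : ContinuousOn wA (Set.Icc 0 (5/24)) := by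
    apply Continuous.continuousOn
    have : Continuous fun lam : ℝ => 1/3 - Real.sqrt (10 - 48 * lam) / 12 := by
      continuity
    exact (by continuity : Continuous f).comp this
  have hle : (0:ℝ) ≤ 5/24 := by norm_num
  have hivt := intermediate_value_Icc hle hcont
  rw [hw524] at hivt
  have hsurj : ∀ s : ℝ, ∃ l : ℝ,
      s ∈ Set.Icc (wA 0) (2/27) → l ∈ Set.Icc (0:ℝ) (5/24) ∧ wA l = s := by
    intro s
    by_cases hs : s ∈ Set.Icc (wA 0) (2/27)
    · obtain ⟨l, hl, hleq⟩ := hivt hs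
      exact ⟨l, fun _ => ⟨hl, hleq⟩⟩
    · exact ⟨0, fun h => absurd h hs⟩
  choose lamℓ hlam using hsurj
  have hw0lt : wA 0 < 2/27 := by
    have := hmono ⟨le_refl 0, hle⟩ ⟨hle, le_refl _⟩ (by norm_num)
    rwa [hw524] at this
  refine ⟨lamℓ, fun s hs => hlam s hs, ?_⟩
  intro lamMax
  -- helper: for s in (wA 0, 2/27), lamℓ s ∈ Ioc 0 (5/24)
  have hkey : ∀ s : ℝ, wA 0 < s → s < 2/27 → lamℓ s ∈ Set.Ioc (0:ℝ) (5/24) := by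
    intro s h1 h2
    obtain ⟨⟨hl0, hl1⟩, hleq⟩ := hlam s ⟨le_of_lt h1, le_of_lt h2⟩
    refine ⟨lt_of_le_of_ne hl0 ?_, hl1⟩
    intro h
    rw [← h] at hleq
    exact absurd hleq.symm (ne_of_gt h1)
  have hsymm_lt : wA 0 < 2/9 := lt_trans hw0lt (by norm_num)
  constructor
  · intro s ⟨hs1, hs2⟩
    show lamMax s ∈ Set.Ioc (0:ℝ) (5/24)
    by_cases h1 : s < 2/27
    · simp only [lamMax, if_pos h1]
      exact hkey s hs1 h1
    · by_cases h2 : s ≤ 2/9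
      · simp only [lamMax, if_neg h1, if_pos h2]
        exact ⟨by norm_num, le_refl _⟩
      · simp only [lamMax, if_neg h1, if_neg h2]
        push_neg at h2
        exact hkey (8/27 - s) (by linarith) (by linarith)
  · intro s ⟨hs1, hs2⟩
    show lamMax s = lamMax (8/27 - s)
    by_cases h1 : s < 2/27
    · have ht1 : ¬ (8/27 - s < 2/27) := by push_neg; linarith
      have ht2 : ¬ (8/27 - s ≤ 2/9) := by push_neg; linarith
      simp only [lamMax, if_pos h1, if_neg ht1, if_neg ht2]
      norm_num
    · by_cases h2 : s ≤ 2/9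
      · push_neg at h1
        have ht1 : ¬ (8/27 - s < 2/27) := by push_neg; linarith
        have ht2 : 8/27 - s ≤ 2/9 := by linarith
        simp only [lamMax, if_neg (not_lt.2 h1), if_pos h2, if_neg ht1, if_pos ht2]
      · push_neg at h2
        have ht1 : 8/27 - s < 2/27 := by linarith
        simp only [lamMax, if_neg h1, if_neg (by push_neg; linarith : ¬ s ≤ 2/9), if_pos ht1]
end
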